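/- arXiv:1908.01029 — 4 statements merged into one kernel-verified Lean document; each statement's English description precedes it below -/
import Mathlib

section
/- Let S be a finite set, f : 2^S → ℝ be monotone and submodular, and c : S → ℝ be a positive cost function with c(X) = ∑_{a∈X} c(a). For all A, B ⊆ S with f(A ∪ B) > f(A), there exists b ∈ B \ A such that (f(A ∪ {b}) - f(A))/c(b) ≥ (f(A ∪ B) - f(A))/c(B). -/
lemma gain_le_sum_marginals {α : Type*} [DecidableEq α]
    (f : Finset α → ℝ)
    (hsub : ∀ A B : Finset α, A ⊆ B → ∀ x : α, x ∉ B →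
      f (insert x A) - f A ≥ f (insert x B) - f B)
    (A : Finset α) :
    ∀ B : Finset α, f (A ∪ B) - f A ≤ ∑ b ∈ B \ A, (f (insert b A) - f A) := by
  intro B
  induction B using Finset.induction with
  | empty => simp
  | @insert x B hx ih =>
    by_cases hxA : x ∈ A
    · have h1 : A ∪ insert x B = A ∪ B := by
        rw [Finset.union_insert, Finset.insert_eq_self.mpr (Finset.mem_union_left _ hxA)]
      have h2 : insert x B \ A = B \ A := by
        rw [Finset.insert_sdiff_of_mem _ hxA]
      rw [h1, h2]; exact ih
    · have h2 : insert x B \ A = insert x (B \ A) := Finset.insert_sdiff_of_notMem _ hxA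
      have hxBA : x ∉ B \ A := fun h => hx (Finset.mem_sdiff.mp h).1
      rw [h2, Finset.sum_insert hxBA]
      have hxAB : x ∉ A ∪ B := by simp [hxA, hx]
      have hs := hsub A (A ∪ B) Finset.subset_union_left x hxAB
      have : f (A ∪ insert x B) = f (insert x (A ∪ B)) := by
        rw [Finset.union_insert]
      rw [this]
      linarith

/-- If f is monotone, submodular, and c is a positive cost
    function, then for all A, B with f(A ∪ B) > f(A) there exists b ∈ B \ A
    with (f(A ∪ {b}) - f(A))/c(b) ≥ (f(A ∪ B) - f(A))/c(B). -/
theorem exists_cost_effective_element {α : Type*} [Fintype α] [DecidableEq α]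
    (f : Finset α → ℝ)
    (hmono : ∀ A B : Finset α, A ⊆ B → f A ≤ f B)
    (hsub : ∀ A B : Finset α, A ⊆ B → ∀ x : α, x ∉ B →
      f (insert x A) - f A ≥ f (insert x B) - f B)
    (c : α → ℝ) (hc : ∀ a : α, 0 < c a)
    (A B : Finset α) (hAB : f (A ∪ B) > f A) :
    ∃ b ∈ B \ A,
      (f (insert b A) - f A) / c b ≥ (f (A ∪ B) - f A) / (∑ a ∈ B, c a) := by
  set r : ℝ := (f (A ∪ B) - f A) / (∑ a ∈ B, c a) with hr
  by_contra hcon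
  push_neg at hcon
  -- B \ A is nonempty
  have hBA : (B \ A).Nonempty := by
    rw [Finset.sdiff_nonempty]
    intro hsub'
    have : A ∪ B = A := Finset.union_eq_left.mpr hsub'
    rw [this] at hAB; exact lt_irrefl _ hAB
  have hBne : B.Nonempty := hBA.mono (Finset.sdiff_subset)
  have hcB : 0 < ∑ a ∈ B, c a := Finset.sum_pos (fun a _ => hc a) hBne
  have hrpos : 0 < r := div_pos (by linarith) hcB
  have hlt : ∀ b ∈ B \ A, f (insert b A) - f A < r * c b := by
    intro b hb
    have := hcon b hb
    rw [div_lt_iff₀ (hc b)] at this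
    linarith
  have hsum := gain_le_sum_marginals f hsub A B
  have hsum2 : ∑ b ∈ B \ A, (f (insert b A) - f A) < ∑ b ∈ B \ A, r * c b :=
    Finset.sum_lt_sum_of_nonempty hBA hlt
  have hsum3 : ∑ b ∈ B \ A, r * c b ≤ r * ∑ a ∈ B, c a := by
    rw [← Finset.mul_sum]
    exact mul_le_mul_of_nonneg_left
      (Finset.sum_le_sum_of_subset_of_nonneg Finset.sdiff_subset
        (fun a _ _ => (hc a).le)) hrpos.le
  have : f (A ∪ B) - f A < r * ∑ a ∈ B, c a := by linarith
  rw [hr, div_mul_cancel₀ _ hcB.ne'] at this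
  exact lt_irrefl _ this
end

section
/- Let S be a finite set, f : 2^S → ℝ be monotone and submodular, c : S → ℝ a positive cost function with c(X) = ∑_{a∈X} c(a), and let τ ∈ ℝ. Let A ⊆ S and A* ⊆ S satisfy f(A*) ≥ τ and f(A) < τ. If a ∈ S \ A maximizes the ratio (f(A ∪ {x}) - f(A))/c(x) over all x ∈ S \ A (i.e., a is the element chosen by the greedy algorithm at the step with current solution A), then f(A ∪ {a}) - f(A) ≥ (c(a)/c(A*))·(τ - f(A)). -/
/-- Auxiliary: sum of single-element marginal gains bounds the joint gain. -/
lemma marginal_sum_bound {α : Type*} [DecidableEq α]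
    (f : Finset α → ℝ)
    (hmono : ∀ A B : Finset α, A ⊆ B → f A ≤ f B)
    (hsub : ∀ A B : Finset α, A ⊆ B → ∀ x : α, x ∉ B →
      f (insert x A) - f A ≥ f (insert x B) - f B)
    (A : Finset α) : ∀ B : Finset α,
    f (A ∪ B) - f A ≤ ∑ x ∈ B, (f (insert x A) - f A) := by
  intro B
  induction B using Finset.induction with
  | empty => simp
  | @insert x B hx ih =>
    rw [Finset.sum_insert hx, Finset.union_insert]
    by_cases hxAB : x ∈ A ∪ B
    · rw [Finset.insert_eq_self.mpr hxAB]
      have h1 : (0:ℝ) ≤ f (insert x A) - f A :=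
        sub_nonneg.mpr (hmono A (insert x A) (Finset.subset_insert _ _))
      linarith
    · have h2 := hsub A (A ∪ B) Finset.subset_union_left x hxAB
      linarith

/-- If f(A*) ≥ τ, f(A) < τ, and a ∈ S \ A maximizes the marginal
    gain per unit cost over S \ A, then
    f(A ∪ {a}) - f(A) ≥ (c(a)/c(A*))·(τ - f(A)). -/
theorem greedy_marginal_gain_lower_bound {α : Type*} [Fintype α] [DecidableEq α]
    (f : Finset α → ℝ)
    (hmono : ∀ A B : Finset α, A ⊆ B → f A ≤ f B)
    (hsub : ∀ A B : Finset α, A ⊆ B → ∀ x : α, x ∉ B →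
      f (insert x A) - f A ≥ f (insert x B) - f B)
    (c : α → ℝ) (hc : ∀ a : α, 0 < c a)
    (τ : ℝ) (A Astar : Finset α)
    (hAstar : f Astar ≥ τ) (hA : f A < τ)
    (a : α) (ha : a ∉ A)
    (hmax : ∀ x : α, x ∉ A →
      (f (insert x A) - f A) / c x ≤ (f (insert a A) - f A) / c a) :
    f (insert a A) - f A ≥ (c a / (∑ x ∈ Astar, c x)) * (τ - f A) := by
  set r : ℝ := (f (insert a A) - f A) / c a with hr
  have hca : 0 < c a := hc a
  have hrnn : 0 ≤ r := div_nonneg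
    (sub_nonneg.mpr (hmono A (insert a A) (Finset.subset_insert _ _))) hca.le
  -- each gain ≤ c x * r
  have hgain : ∀ x ∈ Astar, f (insert x A) - f A ≤ c x * r := by
    intro x _
    by_cases hxA : x ∈ A
    · rw [Finset.insert_eq_self.mpr hxA]
      have := mul_nonneg (hc x).le hrnn
      linarith
    · have := hmax x hxA
      have hcx := hc x
      rw [div_le_iff₀ hcx] at this
      linarith [this]
  have h1 : τ - f A ≤ f (A ∪ Astar) - f A := by
    have := hmono Astar (A ∪ Astar) Finset.subset_union_right
    linarith
  have h2 := marginal_sum_bound f hmono hsub A Astar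
  have h3 : ∑ x ∈ Astar, (f (insert x A) - f A) ≤ ∑ x ∈ Astar, c x * r :=
    Finset.sum_le_sum hgain
  rw [← Finset.sum_mul] at h3
  set C := ∑ x ∈ Astar, c x with hC
  have hkey : τ - f A ≤ C * r := by linarith
  have hτ : 0 < τ - f A := by linarith
  have hCpos : 0 < C := by
    by_contra h
    push_neg at h
    have : C * r ≤ 0 := mul_nonpos_of_nonpos_of_nonneg h hrnn
    linarith
  rw [ge_iff_le, div_mul_eq_mul_div, div_le_iff₀ hCpos]
  calc c a * (τ - f A) ≤ c a * (C * r) := by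
        exact mul_le_mul_of_nonneg_left hkey hca.le
    _ = (f (insert a A) - f A) * C := by
        rw [hr]; field_simp
end

section
/- Let S be a finite set, f : 2^S → ℝ be monotone and submodular, c : S → ℝ a positive cost function with c(X) = ∑_{a∈X} c(a), and τ ∈ ℝ. Let A ⊆ S and A* ⊆ S satisfy f(A*) ≥ τ and f(A) < τ, and let a ∈ S \ A maximize (f(A ∪ {x}) - f(A))/c(x) over x ∈ S \ A. Then τ - f(A ∪ {a}) ≤ (1 - c(a)/c(A*))·(τ - f(A)). -/
lemma submod_sum_aux {α : Type*} [DecidableEq α]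
    (f : Finset α → ℝ)
    (hsub : ∀ A B : Finset α, A ⊆ B → ∀ x : α, x ∉ B →
      f (insert x A) - f A ≥ f (insert x B) - f B)
    (A : Finset α) : ∀ B : Finset α,
    f (A ∪ B) - f A ≤ ∑ x ∈ B \ A, (f (insert x A) - f A) := by
  intro B
  induction B using Finset.induction_on with
  | empty => simp
  | @insert x B hx ih =>
    by_cases hxA : x ∈ A
    · have h1 : A ∪ insert x B = A ∪ B := by
        rw [Finset.union_insert]
        exact Finset.insert_eq_self.mpr (Finset.mem_union_left _ hxA)
      have h2 : insert x B \ A = B \ A := by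
        rw [Finset.insert_sdiff_of_mem _ hxA]
      rw [h1, h2]; exact ih
    · by_cases hxB : x ∈ A ∪ B
      · exact absurd ((Finset.mem_union.mp hxB).resolve_left hxA) hx
      have key := hsub A (A ∪ B) Finset.subset_union_left x hxB
      have h1 : A ∪ insert x B = insert x (A ∪ B) := Finset.union_insert _ _ _
      have h2 : insert x B \ A = insert x (B \ A) := by
        rw [Finset.insert_sdiff_of_notMem _ hxA]
      rw [h1, h2, Finset.sum_insert (by simp [hx])]
      linarith

/-- Residual-gap form of the greedy bound: under the hypotheses of
    Statement 4, τ - f(A ∪ {a}) ≤ (1 - c(a)/c(A*))·(τ - f(A)). -/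
theorem greedy_residual_gap_bound {α : Type*} [Fintype α] [DecidableEq α]
    (f : Finset α → ℝ)
    (hmono : ∀ A B : Finset α, A ⊆ B → f A ≤ f B)
    (hsub : ∀ A B : Finset α, A ⊆ B → ∀ x : α, x ∉ B →
      f (insert x A) - f A ≥ f (insert x B) - f B)
    (c : α → ℝ) (hc : ∀ a : α, 0 < c a)
    (τ : ℝ) (A Astar : Finset α)
    (hAstar : f Astar ≥ τ) (hA : f A < τ)
    (a : α) (ha : a ∉ A)
    (hmax : ∀ x : α, x ∉ A →
      (f (insert x A) - f A) / c x ≤ (f (insert a A) - f A) / c a) :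
    τ - f (insert a A) ≤ (1 - c a / (∑ x ∈ Astar, c x)) * (τ - f A) := by
  set r : ℝ := (f (insert a A) - f A) / c a with hr
  have hca := hc a
  have hrnn : 0 ≤ r := div_nonneg (by
    have := hmono A (insert a A) (Finset.subset_insert _ _); linarith) hca.le
  -- A* nonempty
  have hne : Astar.Nonempty := by
    rcases Astar.eq_empty_or_nonempty with h | h
    · exfalso
      have := hmono ∅ A (Finset.empty_subset _)
      rw [h] at hAstar; linarith
    · exact h
  have hcstar : 0 < ∑ x ∈ Astar, c x :=
    Finset.sum_pos (fun x _ => hc x) hne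
  -- chain
  have h1 : τ - f A ≤ f (A ∪ Astar) - f A := by
    have := hmono Astar (A ∪ Astar) Finset.subset_union_right
    linarith
  have h2 := submod_sum_aux f hsub A Astar
  have h3 : ∑ x ∈ Astar \ A, (f (insert x A) - f A) ≤ ∑ x ∈ Astar \ A, c x * r := by
    apply Finset.sum_le_sum
    intro x hx
    have hxA : x ∉ A := (Finset.mem_sdiff.mp hx).2
    have := hmax x hxA
    have hcx := hc x
    calc f (insert x A) - f A = (f (insert x A) - f A) / c x * c x := by
          field_simp
      _ ≤ r * c x := by nlinarith
      _ = c x * r := mul_comm _ _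
  have h4 : ∑ x ∈ Astar \ A, c x * r ≤ (∑ x ∈ Astar, c x) * r := by
    rw [← Finset.sum_mul]
    apply mul_le_mul_of_nonneg_right _ hrnn
    exact Finset.sum_le_sum_of_subset_of_nonneg (Finset.sdiff_subset)
      (fun x _ _ => (hc x).le)
  have hkey : τ - f A ≤ (∑ x ∈ Astar, c x) * r := by linarith
  have hgain : f (insert a A) - f A = r * c a := by
    rw [hr, div_mul_cancel₀ _ hca.ne']
  have : c a / (∑ x ∈ Astar, c x) * (τ - f A) ≤ f (insert a A) - f A := by
    rw [hgain, div_mul_eq_mul_div, div_le_iff₀ hcstar]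
    nlinarith
  nlinarith
end

section
/- Let S be a finite set, f : 2^S → ℝ be monotone and submodular with f(∅) = 0, let c : S → ℝ be a positive cost function with c(X) = ∑_{a∈X} c(a), let τ > 0, and let A* ⊆ S satisfy f(A*) ≥ τ. Let a_1, ..., a_k be a sequence of distinct elements of S with A_i = {a_1, ..., a_i} (and A_0 = ∅), such that for each 0 ≤ i < k, f(A_i) < τ and a_{i+1} maximizes (f(A_i ∪ {x}) - f(A_i))/c(x) over x ∈ S \ A_i. Then for every 1 ≤ i ≤ k with f(A_i) < τ, it holds that c(A_i)/ln(τ/(τ - f(A_i))) ≤ c(A*). -/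
lemma submod_union_bound {α : Type*} [DecidableEq α]
    (f : Finset α → ℝ)
    (hsub : ∀ A B : Finset α, A ⊆ B → ∀ x : α, x ∉ B →
      f (insert x A) - f A ≥ f (insert x B) - f B)
    (B : Finset α) :
    ∀ T : Finset α, Disjoint T B →
      f (B ∪ T) - f B ≤ ∑ x ∈ T, (f (insert x B) - f B) := by
  intro T
  induction T using Finset.induction_on with
  | empty => simp
  | @insert x T hx ih =>
    intro hd
    have hdT : Disjoint T B := hd.mono_left (Finset.subset_insert x T)
    have hxB : x ∉ B := fun h => (Finset.disjoint_left.mp hd (Finset.mem_insert_self x T)) h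
    have h1 : f (insert x (B ∪ T)) - f (B ∪ T) ≤ f (insert x B) - f B :=
      hsub B (B ∪ T) Finset.subset_union_left x (by simp [hxB, hx])
    have h2 := ih hdT
    rw [Finset.union_insert, Finset.sum_insert hx]
    linarith
/-- Along the greedy sequence a_1, ..., a_k (here 0-indexed as
    a 0, ..., a (k-1), with A i = {a 0, ..., a (i-1)}), every prefix A_i with
    f(A_i) < τ satisfies c(A_i)/ln(τ/(τ - f(A_i))) ≤ c(A*). -/
theorem greedy_prefix_cost_effectiveness {α : Type*} [Fintype α] [DecidableEq α]
    (f : Finset α → ℝ)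
    (hmono : ∀ A B : Finset α, A ⊆ B → f A ≤ f B)
    (hsub : ∀ A B : Finset α, A ⊆ B → ∀ x : α, x ∉ B →
      f (insert x A) - f A ≥ f (insert x B) - f B)
    (hf0 : f ∅ = 0)
    (c : α → ℝ) (hc : ∀ a : α, 0 < c a)
    (τ : ℝ) (hτ : 0 < τ)
    (Astar : Finset α) (hAstar : f Astar ≥ τ)
    (k : ℕ) (a : ℕ → α)
    (hdistinct : ∀ i < k, ∀ j < k, a i = a j → i = j)
    (A : ℕ → Finset α) (hA : ∀ i, A i = Finset.image a (Finset.range i))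
    (hlt : ∀ i < k, f (A i) < τ)
    (hnotmem : ∀ i < k, a i ∉ A i)
    (hmax : ∀ i < k, ∀ x : α, x ∉ A i →
      (f (insert x (A i)) - f (A i)) / c x ≤
        (f (insert (a i) (A i)) - f (A i)) / c (a i)) :
    ∀ i, 1 ≤ i → i ≤ k → f (A i) < τ →
      (∑ x ∈ A i, c x) / Real.log (τ / (τ - f (A i))) ≤ ∑ x ∈ Astar, c x := by
  intro i hi1 hik hfi
  set C := ∑ x ∈ Astar, c x with hCdef
  have hAstar_ne : Astar.Nonempty := by
    rcases Finset.eq_empty_or_nonempty Astar with h | h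
    · exfalso; rw [h, hf0] at hAstar; linarith
    · exact h
  have hC : 0 < C := Finset.sum_pos (fun x _ => hc x) hAstar_ne
  have hAsucc : ∀ j, A (j+1) = insert (a j) (A j) := by
    intro j; rw [hA, hA, Finset.range_add_one, Finset.image_insert]
  -- step inequality
  have hstep : ∀ j < k, τ - f (A (j+1)) ≤ (τ - f (A j)) * (1 - c (a j) / C) := by
    intro j hj
    set B := A j with hB
    set r : ℝ := (f (insert (a j) B) - f B) / c (a j) with hrdef
    have hmarg : ∀ x ∈ Astar \ B, f (insert x B) - f B ≤ c x * r := by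
      intro x hx
      have hxB : x ∉ B := (Finset.mem_sdiff.mp hx).2
      have h := hmax j hj x hxB
      have := (div_le_iff₀ (hc x)).mp h
      linarith [this]
    have h1 : τ - f B ≤ f (B ∪ (Astar \ B)) - f B := by
      have hsub' : Astar ⊆ B ∪ (Astar \ B) := by
        intro y hy
        by_cases hyB : y ∈ B
        · exact Finset.mem_union_left _ hyB
        · exact Finset.mem_union_right _ (Finset.mem_sdiff.mpr ⟨hy, hyB⟩)
      have := hmono _ _ hsub'
      linarith [hAstar]
    have h2 := submod_union_bound f hsub B (Astar \ B) Finset.sdiff_disjoint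
    have h3 : ∑ x ∈ Astar \ B, (f (insert x B) - f B) ≤ ∑ x ∈ Astar \ B, c x * r :=
      Finset.sum_le_sum hmarg
    have hr : 0 ≤ r := by
      apply div_nonneg _ (le_of_lt (hc (a j)))
      have := hmono B (insert (a j) B) (Finset.subset_insert _ _)
      linarith
    have h4 : ∑ x ∈ Astar \ B, c x * r ≤ C * r := by
      rw [← Finset.sum_mul]
      apply mul_le_mul_of_nonneg_right _ hr
      exact Finset.sum_le_sum_of_subset_of_nonneg Finset.sdiff_subset
        (fun x _ _ => le_of_lt (hc x))
    have h5 : τ - f B ≤ C * r := by linarith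
    have hδ : f (insert (a j) B) - f B = r * c (a j) := by
      rw [hrdef, div_mul_cancel₀ _ (ne_of_gt (hc (a j)))]
    have key : (τ - f B) * (c (a j) / C) ≤ r * c (a j) := by
      have := mul_le_mul_of_nonneg_right h5 (le_of_lt (div_pos (hc (a j)) hC))
      calc (τ - f B) * (c (a j) / C) ≤ C * r * (c (a j) / C) := this
        _ = r * c (a j) := by field_simp
    have expand : (τ - f B) * (1 - c (a j) / C)
        = (τ - f B) - (τ - f B) * (c (a j) / C) := by ring
    rw [hAsucc j, expand]
    linarith
  -- gap bound by induction
  have hgap : ∀ j ≤ i, τ - f (A j) ≤ τ * Real.exp (-(∑ x ∈ A j, c x) / C) := by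
    intro j hj
    induction j with
    | zero =>
      have : A 0 = ∅ := by rw [hA]; simp
      rw [this, hf0]
      simp
    | succ j ih =>
      have hjk : j < k := lt_of_lt_of_le (Nat.lt_of_succ_le hj) hik
      have ihj := ih (le_of_lt (Nat.lt_of_succ_le hj))
      have hgj : 0 < τ - f (A j) := by linarith [hlt j hjk]
      have h1 := hstep j hjk
      have h2 : (τ - f (A j)) * (1 - c (a j) / C)
          ≤ (τ - f (A j)) * Real.exp (-(c (a j) / C)) := by
        apply mul_le_mul_of_nonneg_left _ (le_of_lt hgj)
        have := Real.add_one_le_exp (-(c (a j) / C))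
        linarith
      have h3 : (τ - f (A j)) * Real.exp (-(c (a j) / C))
          ≤ τ * Real.exp (-(∑ x ∈ A j, c x) / C) * Real.exp (-(c (a j) / C)) :=
        mul_le_mul_of_nonneg_right ihj (le_of_lt (Real.exp_pos _))
      have hsum : ∑ x ∈ A (j+1), c x = c (a j) + ∑ x ∈ A j, c x := by
        rw [hAsucc j, Finset.sum_insert (hnotmem j hjk)]
      have h4 : τ * Real.exp (-(∑ x ∈ A j, c x) / C) * Real.exp (-(c (a j) / C))
          = τ * Real.exp (-(∑ x ∈ A (j+1), c x) / C) := by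
        rw [hsum, mul_assoc, ← Real.exp_add]
        ring_nf
      linarith
  -- conclude
  have hmain := hgap i le_rfl
  have hgi : 0 < τ - f (A i) := by linarith
  have hlog : Real.log (τ - f (A i)) ≤ Real.log τ + (-(∑ x ∈ A i, c x) / C) := by
    have := Real.log_le_log hgi hmain
    rwa [Real.log_mul (ne_of_gt hτ) (ne_of_gt (Real.exp_pos _)), Real.log_exp] at this
  have hL : (∑ x ∈ A i, c x) / C ≤ Real.log (τ / (τ - f (A i))) := by
    rw [Real.log_div (ne_of_gt hτ) (ne_of_gt hgi)]
    rw [neg_div] at hlog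
    linarith
  have hcAi : 0 < ∑ x ∈ A i, c x := by
    apply Finset.sum_pos (fun x _ => hc x)
    rw [hA]
    exact Finset.Nonempty.image ⟨0, Finset.mem_range.mpr hi1⟩ a
  have hLpos : 0 < Real.log (τ / (τ - f (A i))) :=
    lt_of_lt_of_le (div_pos hcAi hC) hL
  rw [div_le_iff₀ hLpos]
  calc ∑ x ∈ A i, c x = (∑ x ∈ A i, c x) / C * C := by field_simp
    _ ≤ Real.log (τ / (τ - f (A i))) * C := mul_le_mul_of_nonneg_right hL (le_of_lt hC)
    _ = C * Real.log (τ / (τ - f (A i))) := by ring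
end
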